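/- Consider the continuous-time Markov chain on ℤ_{≥0} with transitions m → m+1 at rate κ₁ and m → m - r at rate κ₂ · m!/(m-b-1)! for m ≥ b+1, where b ≥ 1, 0 ≤ a ≤ b, r = b - a + 1, and κ₂ r (b+1)! > κ₁. Then for any integer w with 2 ≤ w ≤ r, the stationary distribution π satisfies π(b + w) ≤ (κ₁/κ₂)^w · (∏_{j=1}^w (j-1)!) / (∏_{j=1}^w (j+b)!) ≤ (κ₁/κ₂)^w / ((b+1)!(b+2)!). -/

import Mathlib

theorem stmt6 (a b r : ℕ) (hab : a ≤ b) (hb : 1 ≤ b) (hr : r = b - a + 1)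
    (κ₁ κ₂ : ℝ) (h1 : 0 < κ₁) (h2 : 0 < κ₂)
    (hgap : κ₁ < κ₂ * r * (Nat.factorial (b + 1) : ℝ))
    (π : ℕ → ℝ) (hπ0 : ∀ m, 0 ≤ π m) (hπ1 : HasSum π 1)
    (hsupp : ∀ m, m < a → π m = 0)
    (hstat : ∀ m : ℕ,
      (if 1 ≤ m then π (m - 1) * κ₁ else 0)
          + π (m + r) * (κ₂ * (Nat.descFactorial (m + r) (b + 1) : ℝ))
        = π m * (κ₁ + κ₂ * (Nat.descFactorial m (b + 1) : ℝ)))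
    (w : ℕ) (hw2 : 2 ≤ w) (hwr : w ≤ r) :
    π (b + w) ≤ (κ₁ / κ₂) ^ w *
        (∏ j ∈ Finset.range w, (Nat.factorial j : ℝ)) /
          (∏ j ∈ Finset.range w, (Nat.factorial (j + 1 + b) : ℝ)) ∧
      (κ₁ / κ₂) ^ w *
          (∏ j ∈ Finset.range w, (Nat.factorial j : ℝ)) /
            (∏ j ∈ Finset.range w, (Nat.factorial (j + 1 + b) : ℝ))
        ≤ (κ₁ / κ₂) ^ w / ((Nat.factorial (b + 1) : ℝ) * (Nat.factorial (b + 2) : ℝ)) := by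
  have hr1 : 1 ≤ r := by omega
  have hrb : r ≤ b + 1 := by omega
  set φ : ℕ → ℝ := fun k => κ₂ * (Nat.descFactorial k (b + 1) : ℝ) with hφ
  have hφ0 : ∀ k, k ≤ b → φ k = 0 := by
    intro k hk
    have hz : Nat.descFactorial k (b + 1) = 0 :=
      Nat.descFactorial_eq_zero_iff_lt.2 (by omega)
    show κ₂ * ((Nat.descFactorial k (b + 1) : ℕ) : ℝ) = 0
    rw [hz]
    simp
  have hφnn : ∀ k, 0 ≤ φ k := by
    intro k
    exact mul_nonneg h2.le (Nat.cast_nonneg _)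
  -- the flux-balance ("cut") identity
  have cut : ∀ M, ∑ k ∈ Finset.Ioc M (M + r), π k * φ k = κ₁ * π M := by
    intro M
    induction M with
    | zero =>
      have h0 := hstat 0
      simp only [show ¬ (1 ≤ 0) by omega, if_neg] at h0
      have hφ00 : φ 0 = 0 := hφ0 0 (by omega)
      rw [Finset.sum_eq_single_of_mem r (by simp [Finset.mem_Ioc]; omega)]
      · have := hstat 0
        simp only [Nat.descFactorial_eq_zero_iff_lt.2 (show (0:ℕ) < b + 1 by omega)] at this
        simp only [zero_add] at this
        simp only [if_neg (by omega : ¬ (1 ≤ 0))] at this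
        push_cast at this
        simp only [hφ, zero_add] at this ⊢
        linarith [this]
      · intro k hk hne
        simp only [Finset.mem_Ioc, zero_add] at hk
        have : φ k = 0 := hφ0 k (by omega)
        simp [this]
    | succ M ih =>
      have hsplit : ∑ k ∈ Finset.Ioc M (M + r), π k * φ k
          = π (M + 1) * φ (M + 1) + ∑ k ∈ Finset.Ioc (M + 1) (M + r), π k * φ k := by
        rw [← Finset.Icc_add_one_left_eq_Ioc, Finset.Icc_eq_cons_Ioc (by omega), Finset.sum_cons]
      have htop : ∑ k ∈ Finset.Ioc (M + 1) (M + 1 + r), π k * φ k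
          = (∑ k ∈ Finset.Ioc (M + 1) (M + r), π k * φ k) + π (M + 1 + r) * φ (M + 1 + r) := by
        have : M + 1 + r = (M + r) + 1 := by omega
        rw [this, Finset.sum_Ioc_succ_top (by omega)]
      have hst := hstat (M + 1)
      simp only [if_pos (by omega : 1 ≤ M + 1), Nat.add_sub_cancel] at hst
      have hst' : π M * κ₁ + π (M + 1 + r) * φ (M + 1 + r)
          = π (M + 1) * (κ₁ + φ (M + 1)) := by
        simpa [hφ, add_right_comm] using hst
      rw [htop]
      rw [hsplit] at ih
      linarith [hst']
  -- single-term bound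
  have step : ∀ j : ℕ, π (b + j + 1) * φ (b + j + 1) ≤ κ₁ * π (b + j) := by
    intro j
    have := cut (b + j)
    have hmem : b + j + 1 ∈ Finset.Ioc (b + j) (b + j + r) := by
      simp [Finset.mem_Ioc]; omega
    calc π (b + j + 1) * φ (b + j + 1)
        ≤ ∑ k ∈ Finset.Ioc (b + j) (b + j + r), π k * φ k :=
          Finset.single_le_sum (fun k _ => mul_nonneg (hπ0 k) (hφnn k)) hmem
      _ = κ₁ * π (b + j) := this
  -- recursion in ratio form
  have hrec : ∀ j : ℕ, π (b + (j + 1)) ≤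
      (κ₁ / κ₂) * ((Nat.factorial j : ℝ) / (Nat.factorial (j + 1 + b) : ℝ)) * π (b + j) := by
    intro j
    have hdesc : (Nat.factorial j) * Nat.descFactorial (b + j + 1) (b + 1)
        = Nat.factorial (b + j + 1) := by
      have := Nat.factorial_mul_descFactorial (show b + 1 ≤ b + j + 1 by omega)
      simpa [show b + j + 1 - (b + 1) = j by omega] using this
    have hDpos : 0 < (Nat.descFactorial (b + j + 1) (b + 1) : ℝ) := by
      have : 0 < Nat.descFactorial (b + j + 1) (b + 1) := by
        rcases Nat.eq_zero_or_pos (Nat.descFactorial (b + j + 1) (b + 1)) with h | h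
        · exfalso; have := Nat.descFactorial_eq_zero_iff_lt.1 h; omega
        · exact h
      exact_mod_cast this
    have hs := step j
    have hφval : φ (b + j + 1) = κ₂ * (Nat.descFactorial (b + j + 1) (b + 1) : ℝ) := rfl
    rw [hφval] at hs
    have hfact : (Nat.factorial j : ℝ) * (Nat.descFactorial (b + j + 1) (b + 1) : ℝ)
        = (Nat.factorial (b + j + 1) : ℝ) := by exact_mod_cast hdesc
    have hjpos : (0:ℝ) < (Nat.factorial (j + 1 + b) : ℝ) := by
      exact_mod_cast Nat.factorial_pos _
    have hjb : j + 1 + b = b + j + 1 := by omega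
    rw [hjb, show b + (j + 1) = b + j + 1 by omega]
    have hFpos : (0:ℝ) < (Nat.factorial (b + j + 1) : ℝ) := by
      exact_mod_cast Nat.factorial_pos _
    have hrhs : (κ₁ / κ₂) * ((Nat.factorial j : ℝ) / (Nat.factorial (b + j + 1) : ℝ)) * π (b + j)
        = (κ₁ * (Nat.factorial j : ℝ) * π (b + j)) / (κ₂ * (Nat.factorial (b + j + 1) : ℝ)) := by
      field_simp
    rw [hrhs, le_div_iff₀ (by positivity)]
    calc π (b + j + 1) * (κ₂ * (Nat.factorial (b + j + 1) : ℝ))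
        = (π (b + j + 1) * (κ₂ * (Nat.descFactorial (b + j + 1) (b + 1) : ℝ)))
          * (Nat.factorial j : ℝ) := by rw [← hfact]; ring
      _ ≤ (κ₁ * π (b + j)) * (Nat.factorial j : ℝ) :=
          mul_le_mul_of_nonneg_right hs (Nat.cast_nonneg _)
      _ = κ₁ * (Nat.factorial j : ℝ) * π (b + j) := by ring
  -- iterate
  have key : ∀ w : ℕ, π (b + w) ≤ (κ₁ / κ₂) ^ w *
      (∏ j ∈ Finset.range w, (Nat.factorial j : ℝ)) /
        (∏ j ∈ Finset.range w, (Nat.factorial (j + 1 + b) : ℝ)) := by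
    intro w
    induction w with
    | zero => simpa using le_hasSum hπ1 b (fun j _ => hπ0 j)
    | succ n ih =>
      have hPpos : (0:ℝ) < ∏ j ∈ Finset.range n, (Nat.factorial (j + 1 + b) : ℝ) := by
        apply Finset.prod_pos; intro i _; exact_mod_cast Nat.factorial_pos _
      have hnf : (0:ℝ) < (Nat.factorial (n + 1 + b) : ℝ) := by
        exact_mod_cast Nat.factorial_pos _
      calc π (b + (n + 1))
          ≤ (κ₁ / κ₂) * ((Nat.factorial n : ℝ) / (Nat.factorial (n + 1 + b) : ℝ)) * π (b + n) :=
            hrec n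
        _ ≤ (κ₁ / κ₂) * ((Nat.factorial n : ℝ) / (Nat.factorial (n + 1 + b) : ℝ)) *
            ((κ₁ / κ₂) ^ n * (∏ j ∈ Finset.range n, (Nat.factorial j : ℝ)) /
              (∏ j ∈ Finset.range n, (Nat.factorial (j + 1 + b) : ℝ))) := by
            apply mul_le_mul_of_nonneg_left ih (by positivity)
        _ = (κ₁ / κ₂) ^ (n + 1) *
            (∏ j ∈ Finset.range (n + 1), (Nat.factorial j : ℝ)) /
              (∏ j ∈ Finset.range (n + 1), (Nat.factorial (j + 1 + b) : ℝ)) := by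
            rw [Finset.prod_range_succ, Finset.prod_range_succ]
            field_simp
            have hk : κ₂ * (κ₁ / κ₂) = κ₁ := by
              rw [mul_div_assoc', mul_comm, mul_div_assoc, div_self h2.ne', mul_one]
            linear_combination -(κ₁ / κ₂) ^ n * hk
  constructor
  · exact key w
  · -- second inequality
    have hP1nn : (0:ℝ) ≤ ∏ j ∈ Finset.range w, (Nat.factorial j : ℝ) := by
      apply Finset.prod_nonneg; intro i _; exact Nat.cast_nonneg _
    have hP2pos : ∀ n : ℕ, (0:ℝ) < ∏ j ∈ Finset.range n, (Nat.factorial (j + 1 + b) : ℝ) := by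
      intro n; apply Finset.prod_pos; intro i _; exact_mod_cast Nat.factorial_pos _
    have hbb : (0:ℝ) < (Nat.factorial (b + 1) : ℝ) * (Nat.factorial (b + 2) : ℝ) := by
      have := Nat.factorial_pos (b + 1); have := Nat.factorial_pos (b + 2); positivity
    -- key product inequality for w ≥ 2
    have hprod : ∀ n : ℕ, 2 ≤ n →
        (∏ j ∈ Finset.range n, (Nat.factorial j : ℝ)) *
          ((Nat.factorial (b + 1) : ℝ) * (Nat.factorial (b + 2) : ℝ))
        ≤ ∏ j ∈ Finset.range n, (Nat.factorial (j + 1 + b) : ℝ) := by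
      intro n hn
      induction n with
      | zero => omega
      | succ m ih =>
        rcases Nat.lt_or_ge m 2 with hm | hm
        · interval_cases m
          · omega
          · -- n = 2
            simp only [Finset.prod_range_succ, Finset.prod_range_one]
            norm_num
            rw [show 0 + 1 + b = b + 1 by omega, show 1 + 1 + b = b + 2 by omega]
        · have ihm := ih hm
          rw [Finset.prod_range_succ, Finset.prod_range_succ]
          have hle : (Nat.factorial m : ℝ) ≤ (Nat.factorial (m + 1 + b) : ℝ) := by
            exact_mod_cast Nat.factorial_le (by omega)
          have h1nn : (0:ℝ) ≤ (∏ j ∈ Finset.range m, (Nat.factorial j : ℝ)) *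
              ((Nat.factorial (b + 1) : ℝ) * (Nat.factorial (b + 2) : ℝ)) := by
            apply mul_nonneg _ hbb.le
            apply Finset.prod_nonneg; intro i _; exact Nat.cast_nonneg _
          calc (∏ j ∈ Finset.range m, (Nat.factorial j : ℝ)) * (Nat.factorial m : ℝ) *
              ((Nat.factorial (b + 1) : ℝ) * (Nat.factorial (b + 2) : ℝ))
              = ((∏ j ∈ Finset.range m, (Nat.factorial j : ℝ)) *
                ((Nat.factorial (b + 1) : ℝ) * (Nat.factorial (b + 2) : ℝ))) *
                (Nat.factorial m : ℝ) := by ring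
            _ ≤ (∏ j ∈ Finset.range m, (Nat.factorial (j + 1 + b) : ℝ)) *
                (Nat.factorial (m + 1 + b) : ℝ) := by
                apply mul_le_mul ihm hle (Nat.cast_nonneg _) (hP2pos m).le
    have hmain := hprod w hw2
    have hxnn : (0:ℝ) ≤ (κ₁ / κ₂) ^ w := by positivity
    rw [div_le_div_iff₀ (hP2pos w) hbb, mul_comm ((κ₁ / κ₂) ^ w) _]
    calc (∏ j ∈ Finset.range w, (Nat.factorial j : ℝ)) * ((κ₁ / κ₂) ^ w) *
        ((Nat.factorial (b + 1) : ℝ) * (Nat.factorial (b + 2) : ℝ))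
        = ((∏ j ∈ Finset.range w, (Nat.factorial j : ℝ)) *
          ((Nat.factorial (b + 1) : ℝ) * (Nat.factorial (b + 2) : ℝ))) * ((κ₁ / κ₂) ^ w) := by
          ring
      _ ≤ (∏ j ∈ Finset.range w, (Nat.factorial (j + 1 + b) : ℝ)) * ((κ₁ / κ₂) ^ w) := by
          apply mul_le_mul_of_nonneg_right hmain hxnn
      _ = (κ₁ / κ₂) ^ w * (∏ j ∈ Finset.range w, (Nat.factorial (j + 1 + b) : ℝ)) := by ring
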